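/- arXiv:2201.12009 — 11 statements merged into one kernel-verified Lean document; each statement's English description precedes it below -/
import Mathlib

section
/- For i ≥ 2, with d = 2i-s-1 and g = 2i-2, one has the identity 2·∑_{s=0}^{i-2} 4·a(2i-1-s, 2i-2) = 8·C(2i-2, i), where a(d,g) = (2d-g-1)·g!/(d!·(g-d+1)!). -/
open Finset

/-- `a(d,g) = (2d-g-1)·g!/(d!·(g-d+1)!)` as a rational number. -/
noncomputable def aPencil (d g : ℕ) : ℚ :=
  ((2 * d : ℚ) - g - 1) * Nat.factorial g /
    (Nat.factorial d * Nat.factorial (g - d + 1))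

lemma aPencil_eq_choose_sub (d g : ℕ) (hd : 1 ≤ d) (hdg : d ≤ g + 1) :
    aPencil d g = (g.choose (d - 1) : ℚ) - g.choose d := by
  obtain ⟨e, rfl⟩ := Nat.exists_eq_add_of_le hd
  simp only [Nat.add_sub_cancel_left] at *
  rcases Nat.lt_or_ge e g with hlt | hge
  · -- 1 + e ≤ g
    have h1 : 1 + e ≤ g := by omega
    have h2 : e ≤ g := le_of_lt hlt
    have hsub : g - (1 + e) + 1 = g - e := by omega
    rw [aPencil, hsub, Nat.cast_choose ℚ h2, Nat.cast_choose ℚ h1]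
    have hge1 : 1 ≤ g - e := by omega
    have hfe : ((1 + e).factorial : ℚ) = (1 + e) * e.factorial := by
      rw [show 1 + e = e + 1 by omega, Nat.factorial_succ]; push_cast; ring
    have hfg : ((g - e).factorial : ℚ) = (g - e) * (g - (1 + e)).factorial := by
      have : g - e = (g - (1 + e)) + 1 := by omega
      rw [this, Nat.factorial_succ]
      have : ((g - (1 + e) : ℕ) : ℚ) + 1 = ((g - e : ℕ) : ℚ) := by
        push_cast [Nat.cast_sub h2, Nat.cast_sub h1]; ring
      push_cast
      rw [this, Nat.cast_sub h2]
    rw [hfe, hfg]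
    have he0 : (e.factorial : ℚ) ≠ 0 := Nat.cast_ne_zero.2 e.factorial_ne_zero
    have hg0 : ((g - (1+e)).factorial : ℚ) ≠ 0 := Nat.cast_ne_zero.2 (Nat.factorial_ne_zero _)
    have h1e : ((1:ℚ) + e) ≠ 0 := by positivity
    have hge0 : ((g:ℚ) - e) ≠ 0 :=
      sub_ne_zero.2 (by exact_mod_cast hlt.ne')
    push_cast [Nat.cast_sub h2]
    field_simp
    ring
  · -- d = g + 1
    have heg : e = g := by omega
    subst heg
    rw [aPencil]
    have h0 : e - (1 + e) + 1 = 1 := by omega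
    rw [h0]
    have hc1 : e.choose e = 1 := Nat.choose_self e
    have hc0 : e.choose (1 + e) = 0 := Nat.choose_eq_zero_of_lt (by omega)
    rw [hc1, hc0]
    have hf : ((1 + e).factorial : ℚ) = (1 + e) * e.factorial := by
      rw [show 1 + e = e + 1 by omega, Nat.factorial_succ]; push_cast; ring
    rw [hf]
    have hg0 : (e.factorial : ℚ) ≠ 0 := Nat.cast_ne_zero.2 (Nat.factorial_ne_zero _)
    have h1g : ((1:ℚ) + e) ≠ 0 := by positivity
    simp only [Nat.factorial_one]
    push_cast
    field_simp
    ring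

theorem sum_a_caseI (i : ℕ) (hi : 2 ≤ i) :
    2 * ∑ s ∈ Finset.range (i - 1), 4 * aPencil (2 * i - 1 - s) (2 * i - 2)
      = 8 * ((2 * i - 2).choose i : ℚ) := by
  set g := 2 * i - 2 with hg
  have key : ∑ s ∈ Finset.range (i - 1), aPencil (2 * i - 1 - s) g
      = ((g.choose i : ℚ)) := by
    have hstep : ∀ s ∈ Finset.range (i - 1),
        aPencil (2 * i - 1 - s) g
          = (g.choose (2 * i - 1 - (s + 1)) : ℚ) - g.choose (2 * i - 1 - s) := by
      intro s hs
      rw [Finset.mem_range] at hs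
      have h1 : 1 ≤ 2 * i - 1 - s := by omega
      have h2 : 2 * i - 1 - s ≤ g + 1 := by omega
      rw [aPencil_eq_choose_sub _ _ h1 h2,
        show 2 * i - 1 - s - 1 = 2 * i - 1 - (s + 1) from by omega]
    rw [Finset.sum_congr rfl hstep,
      Finset.sum_range_sub (fun s => (g.choose (2 * i - 1 - s) : ℚ))]
    have e1 : 2 * i - 1 - (i - 1) = i := by omega
    have e2 : 2 * i - 1 - 0 = 2 * i - 1 := by omega
    rw [e1, e2, Nat.choose_eq_zero_of_lt (by omega : g < 2 * i - 1)]
    simp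
  calc 2 * ∑ s ∈ Finset.range (i - 1), 4 * aPencil (2 * i - 1 - s) g
      = 8 * ∑ s ∈ Finset.range (i - 1), aPencil (2 * i - 1 - s) g := by
        rw [Finset.mul_sum, Finset.mul_sum]; congr 1; ext s; ring
    _ = 8 * (g.choose i : ℚ) := by rw [key]
end

section
/- For i ≥ 2, the identity ∑_{s=0}^{i-1} 2·e(2i-s, 2i-2) = 16(3i-2)·C(2i-2, i) holds, where e(d,g) = 8·g!/((d-3)!·(g-d+2)!) - 8·g!/(d!·(g-d-1)!). -/
open Finset

/-- `e(d,g) = 8·g!/((d-3)!·(g-d+2)!) - 8·g!/(d!·(g-d-1)!)` as a rational number,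
where a term is interpreted as `0` if a factorial argument would be negative. -/
noncomputable def ePencil (d g : ℕ) : ℚ :=
  (if 3 ≤ d ∧ d ≤ g + 2 then
      8 * (Nat.factorial g : ℚ) /
        (Nat.factorial (d - 3) * Nat.factorial (g + 2 - d))
    else 0)
  - (if d + 1 ≤ g then
      8 * (Nat.factorial g : ℚ) /
        (Nat.factorial d * Nat.factorial (g - d - 1))
    else 0)

lemma ePencil_term (m s : ℕ) (hs : s ≤ m + 1) :
    ePencil (2 * m + 4 - s) (2 * m + 2)
      = 8 * (2 * (m : ℚ) + 2) *
          (((2 * m + 1).choose (2 * m + 1 - s) : ℚ)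
            - ((2 * m + 1).choose (2 * m + 4 - s) : ℚ)) := by
  unfold ePencil
  have hd3 : 2 * m + 4 - s - 3 = 2 * m + 1 - s := by omega
  have hg2 : 2 * m + 2 + 2 - (2 * m + 4 - s) = s := by omega
  rw [if_pos (by omega : 3 ≤ 2 * m + 4 - s ∧ 2 * m + 4 - s ≤ 2 * m + 2 + 2), hd3, hg2]
  have hfac : ((2 * m + 2).factorial : ℚ) = (2 * (m : ℚ) + 2) * (2 * m + 1).factorial := by
    have : (2 * m + 2).factorial = (2 * m + 2) * (2 * m + 1).factorial :=
      Nat.factorial_succ (2 * m + 1)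
    rw [this]; push_cast; ring
  have hc1 : ((2 * m + 1).choose (2 * m + 1 - s) : ℚ)
      = ((2 * m + 1).factorial : ℚ)
        / ((2 * m + 1 - s).factorial * ((2 * m + 1) - (2 * m + 1 - s)).factorial) :=
    Nat.cast_choose ℚ (by omega)
  have hss : (2 * m + 1) - (2 * m + 1 - s) = s := by omega
  rw [hss] at hc1
  by_cases h3 : 3 ≤ s
  · rw [if_pos (by omega : 2 * m + 4 - s + 1 ≤ 2 * m + 2)]
    have hc2 : ((2 * m + 1).choose (2 * m + 4 - s) : ℚ)
        = ((2 * m + 1).factorial : ℚ)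
          / ((2 * m + 4 - s).factorial * ((2 * m + 1) - (2 * m + 4 - s)).factorial) :=
      Nat.cast_choose ℚ (by omega)
    have hs3 : (2 * m + 1) - (2 * m + 4 - s) = s - 3 := by omega
    have hs3' : 2 * m + 2 - (2 * m + 4 - s) - 1 = s - 3 := by omega
    rw [hs3] at hc2
    rw [hs3', hc1, hc2, hfac]
    ring
  · rw [if_neg (by omega : ¬ (2 * m + 4 - s + 1 ≤ 2 * m + 2))]
    have hc2 : ((2 * m + 1).choose (2 * m + 4 - s) : ℚ) = 0 := by
      rw [Nat.choose_eq_zero_of_lt (by omega)]; norm_num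
    rw [hc1, hc2, hfac]
    ring

lemma tele (a : ℕ → ℚ) : ∀ N, ∑ s ∈ Finset.range N, (a (s + 3) - a s)
    = a (N + 2) + a (N + 1) + a N - a 2 - a 1 - a 0 := by
  intro N
  induction N with
  | zero => simp only [Finset.sum_range_zero]; ring
  | succ n ih =>
      rw [Finset.sum_range_succ, ih]
      have e1 : n + 1 + 2 = n + 3 := by omega
      have e2 : n + 1 + 1 = n + 2 := by omega
      rw [e1, e2]
      ring

theorem sum_e_caseII (i : ℕ) (hi : 2 ≤ i) :
    ∑ s ∈ Finset.range i, 2 * ePencil (2 * i - s) (2 * i - 2)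
      = 16 * (3 * (i : ℚ) - 2) * ((2 * i - 2).choose i : ℚ) := by
  obtain ⟨m, rfl⟩ : ∃ m, i = m + 2 := ⟨i - 2, by omega⟩
  set a : ℕ → ℚ := fun s => ((2 * m + 1).choose (2 * m + 4 - s) : ℚ) with ha
  have hstep : ∀ s ∈ Finset.range (m + 2),
      2 * ePencil (2 * (m + 2) - s) (2 * (m + 2) - 2)
        = 32 * ((m : ℚ) + 1) * (a (s + 3) - a s) := by
    intro s hs
    simp only [Finset.mem_range] at hs
    have h1 : 2 * (m + 2) - s = 2 * m + 4 - s := by omega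
    have h2 : 2 * (m + 2) - 2 = 2 * m + 2 := by omega
    have h3 : 2 * m + 4 - (s + 3) = 2 * m + 1 - s := by omega
    rw [h1, h2, ePencil_term m s (by omega), ha]
    simp only [h3]
    ring
  rw [Finset.sum_congr rfl hstep, ← Finset.mul_sum, tele a (m + 2)]
  have z0 : a 0 = 0 := by
    simp only [ha]; rw [Nat.choose_eq_zero_of_lt (by omega)]; norm_num
  have z1 : a 1 = 0 := by
    simp only [ha]; rw [Nat.choose_eq_zero_of_lt (by omega)]; norm_num
  have z2 : a 2 = 0 := by
    simp only [ha]; rw [Nat.choose_eq_zero_of_lt (by omega)]; norm_num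
  have v2 : a (m + 2) = ((2 * m + 1).choose (m + 2) : ℚ) := by
    simp only [ha]
    congr 2
    omega
  have v3 : a (m + 2 + 1) = ((2 * m + 1).choose (m + 1) : ℚ) := by
    simp only [ha]
    congr 2
    omega
  have v4 : a (m + 2 + 2) = ((2 * m + 1).choose m : ℚ) := by
    simp only [ha]
    congr 2
    omega
  rw [z0, z1, z2, v2, v3, v4]
  have hch : 2 * (m + 2) - 2 = 2 * m + 2 := by omega
  have hch2 : (2 * (m + 2) - 2).choose (m + 2) = (2 * m + 2).choose (m + 2) := by rw [hch]
  rw [hch2]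
  -- key nat identities
  have h1 : (2 * m + 1).choose m = (2 * m + 1).choose (m + 1) := by
    have := Nat.choose_symm (n := 2 * m + 1) (k := m + 1) (by omega)
    have e : 2 * m + 1 - (m + 1) = m := by omega
    rw [e] at this
    exact this
  have h2 : (2 * m + 2).choose (m + 2) = (2 * m + 1).choose (m + 1) + (2 * m + 1).choose (m + 2) :=
    Nat.choose_succ_succ (2 * m + 1) (m + 1)
  have h3 : (2 * m + 1).choose (m + 2) * (m + 2) = (2 * m + 1).choose (m + 1) * m := by
    have := Nat.choose_succ_right_eq (2 * m + 1) (m + 1)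
    have e : 2 * m + 1 - (m + 1) = m := by omega
    rw [e] at this
    exact this
  have h1' : ((2 * m + 1).choose m : ℚ) = ((2 * m + 1).choose (m + 1) : ℚ) := by exact_mod_cast h1
  have h2' : ((2 * m + 2).choose (m + 2) : ℚ)
      = ((2 * m + 1).choose (m + 1) : ℚ) + ((2 * m + 1).choose (m + 2) : ℚ) := by exact_mod_cast h2
  have h3' : ((2 * m + 1).choose (m + 2) : ℚ) * ((m : ℚ) + 2)
      = ((2 * m + 1).choose (m + 1) : ℚ) * (m : ℚ) := by exact_mod_cast h3
  push_cast
  linear_combination (32 * ((m : ℚ) + 1)) * h1' - (16 * (3 * (m : ℚ) + 4)) * h2' - 16 * h3'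
end

section
/- For i ≥ 2, the identity 4·∑_{s=0}^{i-1} a(2i-s-1, 2i-2) - 2·a(i, 2i-2) = 2·C(2i-1, i) holds, where a(d,g) = (2d-g-1)·g!/(d!·(g-d+1)!). -/
open Finset

lemma key (p u : ℕ) : aPencil (p+1) (p+u)
    = ((p+u).choose p : ℚ) - ((p+u).choose (p+1) : ℚ) := by
  cases u with
  | zero =>
      simp only [aPencil, Nat.add_zero, Nat.choose_self, Nat.choose_succ_self_right]
      have h1 : p - (p+1) + 1 = 1 := by omega
      rw [h1]
      have : ((p:ℚ)+1) ≠ 0 := by positivity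
      rw [Nat.choose_succ_self]
      push_cast
      rw [Nat.factorial_succ]
      push_cast
      field_simp
      rw [Nat.factorial_one]; push_cast; ring
  | succ u =>
      have h1 : p + (u+1) - (p+1) + 1 = u + 1 := by omega
      rw [aPencil, h1,
        Nat.cast_choose ℚ (by omega : p ≤ p + (u+1)),
        Nat.cast_choose ℚ (by omega : p + 1 ≤ p + (u+1))]
      have h2 : p + (u+1) - p = u + 1 := by omega
      have h3 : p + (u+1) - (p+1) = u := by omega
      rw [h2, h3, Nat.factorial_succ (p), Nat.factorial_succ u]
      have f1 : (Nat.factorial p : ℚ) ≠ 0 := by positivity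
      have f2 : (Nat.factorial u : ℚ) ≠ 0 := by positivity
      have f3 : ((p:ℚ)+1) ≠ 0 := by positivity
      have f4 : ((u:ℚ)+1) ≠ 0 := by positivity
      push_cast
      field_simp
      ring

theorem two_prym_count (i : ℕ) (hi : 2 ≤ i) :
    4 * ∑ s ∈ Finset.range i, aPencil (2 * i - s - 1) (2 * i - 2)
      - 2 * aPencil i (2 * i - 2)
      = 2 * ((2 * i - 1).choose i : ℚ) := by
  have hsum : ∑ s ∈ Finset.range i, aPencil (2 * i - s - 1) (2 * i - 2)
      = ((2*i-2).choose (i-1) : ℚ) := by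
    have hterm : ∀ s ∈ Finset.range i,
        aPencil (2 * i - s - 1) (2 * i - 2)
        = (((2*i-2).choose (2*i-1-(s+1)) : ℚ)) - ((2*i-2).choose (2*i-1-s) : ℚ) := by
      intro s hs
      rw [Finset.mem_range] at hs
      have e1 : 2*i - s - 1 = (2*i-s-2) + 1 := by omega
      have e2 : 2*i - 2 = (2*i-s-2) + s := by omega
      have e3 : 2*i-1-(s+1) = 2*i-s-2 := by omega
      have e4 : 2*i-1-s = (2*i-s-2)+1 := by omega
      rw [e1, e3, e4]
      calc aPencil (2*i-s-2+1) (2*i-2)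
          = aPencil (2*i-s-2+1) ((2*i-s-2)+s) := by rw [← e2]
        _ = _ := by rw [key, ← e2]
    rw [Finset.sum_congr rfl hterm,
      Finset.sum_range_sub (fun s => ((2*i-2).choose (2*i-1-s) : ℚ))]
    have e5 : 2*i-1-i = i-1 := by omega
    have e6 : 2*i-1-0 = 2*i-1 := by omega
    rw [e5, e6, Nat.choose_eq_zero_of_lt (show 2*i-2 < 2*i-1 by omega)]
    simp
  rw [hsum]
  have hd : 2*i-2 - i + 1 = i - 1 := by omega
  have hnum : ((2 * i : ℚ)) - ((2*i-2 : ℕ) : ℚ) - 1 = 1 := by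
    push_cast [Nat.cast_sub (by omega : 2 ≤ 2*i)]
    ring
  rw [aPencil, hd]
  rw [Nat.cast_choose ℚ (by omega : i - 1 ≤ 2*i-2),
      Nat.cast_choose ℚ (by omega : i ≤ 2*i-1)]
  have e7 : 2*i-2 - (i-1) = i - 1 := by omega
  have e8 : 2*i-1 - i = i - 1 := by omega
  rw [e7, e8]
  have e9 : (2*i-1).factorial = (2*i-1) * (2*i-2).factorial := by
    have : 2*i-1 = (2*i-2) + 1 := by omega
    rw [this, Nat.factorial_succ]
  have e10 : (i).factorial = i * (i-1).factorial := by
    conv_lhs => rw [show i = (i-1)+1 by omega]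
    rw [Nat.factorial_succ]
    congr 1
    omega
  rw [e9, e10]
  have f1 : ((i-1).factorial : ℚ) ≠ 0 := by positivity
  have f2 : ((2*i-2).factorial : ℚ) ≠ 0 := by positivity
  have f3 : (i : ℚ) ≠ 0 := by positivity
  have h2i : ((2*i-1 : ℕ) : ℚ) = 2*(i:ℚ) - 1 := by
    push_cast [Nat.cast_sub (by omega : 1 ≤ 2*i)]; ring
  push_cast [h2i]
  rw [hnum]
  field_simp
  ring
end

section
/- For i ≥ 2, the identity 8·∑_{s=1}^{i-2} (4i-4s-1)·C(2i-2, s-1) = 4(4i-3)·C(2i-2, i-1) - 24·C(2i-2, i) - 2^{2i} holds. -/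
open Finset

lemma tele_s5 (n : ℕ) (m : ℕ) :
    ∑ t ∈ range m, (((n : ℚ) - 2 * t) * (n.choose t : ℚ)) = m * (n.choose m : ℚ) := by
  induction m with
  | zero => simp
  | succ m ih =>
    rw [sum_range_succ, ih]
    rcases le_or_gt m n with h1 | h1
    · have h := Nat.choose_succ_right_eq n m
      have hc : ((n.choose (m + 1) : ℚ)) * (m + 1) = (n.choose m : ℚ) * ((n : ℚ) - m) := by
        have := congrArg (Nat.cast : ℕ → ℚ) h
        push_cast [Nat.cast_sub h1] at this
        linarith
      push_cast
      linear_combination -hc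
    · have h2 : n.choose m = 0 := Nat.choose_eq_zero_of_lt h1
      have h3 : n.choose (m + 1) = 0 := Nat.choose_eq_zero_of_lt (by omega)
      simp [h2, h3]

lemma halfsum (m : ℕ) :
    2 * ∑ t ∈ range m, (2 * m).choose t + (2 * m).choose m = 2 ^ (2 * m) := by
  have h0 : ∑ t ∈ range (2 * m + 1), (2 * m).choose t = 2 ^ (2 * m) :=
    Nat.sum_range_choose (2 * m)
  have hsplit : ∑ t ∈ range (m + (m + 1)), (2 * m).choose t
      = ∑ t ∈ range m, (2 * m).choose t + ∑ t ∈ range (m + 1), (2 * m).choose (m + t) :=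
    Finset.sum_range_add _ m (m + 1)
  have hB : ∑ t ∈ range (m + 1), (2 * m).choose (m + t)
      = (2 * m).choose m + ∑ t ∈ range m, (2 * m).choose (m + 1 + t) := by
    rw [Finset.sum_range_succ']
    have he : ∀ t ∈ range m, (2 * m).choose (m + (t + 1)) = (2 * m).choose (m + 1 + t) := by
      intro t _; congr 1; omega
    rw [Finset.sum_congr rfl he, add_comm, Nat.add_zero]
  have hsym : ∀ t ∈ range m, (2 * m).choose (m + 1 + t) = (2 * m).choose (m - 1 - t) := by
    intro t ht
    simp only [mem_range] at ht
    have : m - 1 - t = 2 * m - (m + 1 + t) := by omega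
    rw [this, Nat.choose_symm (by omega)]
  have hrefl : ∑ t ∈ range m, (2 * m).choose (m - 1 - t)
      = ∑ t ∈ range m, (2 * m).choose t :=
    Finset.sum_range_reflect (fun t => (2 * m).choose t) m
  have h2m : 2 * m + 1 = m + (m + 1) := by omega
  rw [h2m, hsplit, hB, Finset.sum_congr rfl hsym, hrefl] at h0
  omega

theorem prymunram_caseI (i : ℕ) (hi : 2 ≤ i) :
    8 * ∑ s ∈ Finset.Icc 1 (i - 2),
        ((4 * (i : ℚ) - 4 * s - 1) * ((2 * i - 2).choose (s - 1) : ℚ))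
      = 4 * (4 * (i : ℚ) - 3) * ((2 * i - 2).choose (i - 1) : ℚ)
        - 24 * ((2 * i - 2).choose i : ℚ) - 2 ^ (2 * i) := by
  set n := 2 * i - 2 with hn
  -- reindex the sum
  have hreindex : ∑ s ∈ Finset.Icc 1 (i - 2),
      ((4 * (i : ℚ) - 4 * s - 1) * (n.choose (s - 1) : ℚ))
      = ∑ t ∈ range (i - 2), ((4 * (i : ℚ) - 4 * (t + 1) - 1) * (n.choose t : ℚ)) := by
    rw [show Finset.Icc 1 (i - 2) = Finset.Ico 1 ((i - 2) + 1) from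
      (Finset.Ico_add_one_right_eq_Icc 1 (i - 2)).symm, Finset.sum_Ico_eq_sum_range,
      Nat.add_sub_cancel]
    apply Finset.sum_congr rfl
    intro t _
    rw [show 1 + t - 1 = t by omega]
    push_cast
    ring_nf
  -- telescoping part
  have hT := tele_s5 n (i - 2)
  -- partial sum of binomials
  have hhalf := halfsum (i - 1)
  have h2i : 2 * (i - 1) = n := by omega
  rw [h2i] at hhalf
  have hsplit : ∑ t ∈ range (i - 1), n.choose t
      = ∑ t ∈ range (i - 2), n.choose t + n.choose (i - 2) := by
    have : i - 1 = (i - 2) + 1 := by omega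
    rw [this, Finset.sum_range_succ]
  rw [hsplit] at hhalf
  -- cast to ℚ
  set P : ℚ := ∑ t ∈ range (i - 2), (n.choose t : ℚ) with hP
  have hhalfQ : 2 * (P + (n.choose (i - 2) : ℚ)) + (n.choose (i - 1) : ℚ)
      = 2 ^ (2 * (i - 1)) := by
    have := congrArg (Nat.cast : ℕ → ℚ) hhalf
    push_cast at this
    rw [hP]
    rw [show 2 * (i - 1) = n by omega]
    linarith
  -- symmetry: C(n, i-2) = C(n, i)
  have hsymm : n.choose (i - 2) = n.choose i := by
    have : i - 2 = n - i := by omega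
    rw [this, Nat.choose_symm (by omega)]
  -- ratio: i * C(n, i) = (i-1) * C(n, i-1)
  have hrat : (i : ℚ) * (n.choose i : ℚ) = ((i : ℚ) - 1) * (n.choose (i - 1) : ℚ) := by
    have h := Nat.choose_succ_right_eq n (i - 1)
    have h1 : i - 1 + 1 = i := by omega
    have h2 : n - (i - 1) = i - 1 := by omega
    rw [h1, h2] at h
    have := congrArg (Nat.cast : ℕ → ℚ) h
    push_cast [Nat.cast_sub (by omega : 1 ≤ i)] at this
    linarith
  -- rewrite the sum: coefficient = 2*(n - 2t) - 1
  have hcoef : ∑ t ∈ range (i - 2), ((4 * (i : ℚ) - 4 * (t + 1) - 1) * (n.choose t : ℚ))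
      = 2 * ((i : ℚ) - 2) * (n.choose (i - 2) : ℚ) - P := by
    have hnc : (n : ℚ) = 2 * i - 2 := by
      rw [hn]; push_cast [Nat.cast_sub (by omega : 2 ≤ 2 * i)]; ring
    calc ∑ t ∈ range (i - 2), ((4 * (i : ℚ) - 4 * (t + 1) - 1) * (n.choose t : ℚ))
        = ∑ t ∈ range (i - 2), (2 * (((n : ℚ) - 2 * t) * (n.choose t : ℚ)) - (n.choose t : ℚ)) := by
          apply Finset.sum_congr rfl
          intro t _
          rw [hnc]; ring
      _ = 2 * (((i - 2 : ℕ) : ℚ) * (n.choose (i - 2) : ℚ)) - P := by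
          rw [Finset.sum_sub_distrib, ← Finset.mul_sum, hT, hP]
      _ = 2 * ((i : ℚ) - 2) * (n.choose (i - 2) : ℚ) - P := by
          push_cast [Nat.cast_sub hi]; ring
  have hpow : (2 : ℚ) ^ (2 * i) = 4 * 2 ^ (2 * (i - 1)) := by
    rw [show 2 * i = 2 * (i - 1) + 2 by omega]; ring
  rw [hreindex, hcoef]
  have hsymmQ : (n.choose (i - 2) : ℚ) = (n.choose i : ℚ) := by exact_mod_cast congrArg (Nat.cast : ℕ → ℚ) hsymm
  linear_combination (-4 : ℚ) * hhalfQ + 16 * hrat + (16 * (i : ℚ) - 24) * hsymmQ + hpow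
end

section
/- For i ≥ 2, the identity (2/(2i-1))·∑_{s=0}^{i-2} (4i-4s-2)(2i-2s-1)·C(2i-1, s) = 2^{2i} - (4/(2i-1))·C(2i-1, i) holds in the rationals. -/
open Finset

theorem prymunram_caseII (i : ℕ) (hi : 2 ≤ i) :
    (2 / (2 * (i : ℚ) - 1)) * ∑ s ∈ Finset.range (i - 1),
        ((4 * (i : ℚ) - 4 * s - 2) * (2 * (i : ℚ) - 2 * s - 1)
          * ((2 * i - 1).choose s : ℚ))
      = 2 ^ (2 * i) - (4 / (2 * (i : ℚ) - 1)) * ((2 * i - 1).choose i : ℚ) := by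
  obtain ⟨j, rfl⟩ : ∃ j, i = j + 2 := ⟨i - 2, by omega⟩
  have hn : 2 * (j + 2) - 1 = 2 * j + 3 := by omega
  have hm : j + 2 - 1 = j + 1 := by omega
  rw [hn, hm]
  set g : ℕ → ℚ := fun s => 2 * s * (2 * (j : ℚ) + 4 - 2 * s) * ((2 * j + 3).choose s : ℚ)
    with hg
  have key : ∀ s ∈ Finset.range (j + 1),
      (4 * ((j + 2 : ℕ) : ℚ) - 4 * (s : ℚ) - 2) * (2 * ((j + 2 : ℕ) : ℚ) - 2 * (s : ℚ) - 1)
          * ((2 * j + 3).choose s : ℚ)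
        = (g (s + 1) - g s) + (4 * (j : ℚ) + 6) * ((2 * j + 3).choose s : ℚ) := by
    intro s hs
    simp only [Finset.mem_range] at hs
    have h1 := Nat.choose_succ_right_eq (2 * j + 3) s
    have h1q : ((2 * j + 3).choose (s + 1) : ℚ) * ((s : ℚ) + 1)
        = ((2 * j + 3).choose s : ℚ) * (2 * (j : ℚ) + 3 - s) := by
      have h2 : ((2 * j + 3 - s : ℕ) : ℚ) = 2 * (j : ℚ) + 3 - s := by
        have hs' : s ≤ 2 * j + 3 := by omega
        push_cast [hs']; ring
      have := congrArg (Nat.cast : ℕ → ℚ) h1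
      push_cast at this
      rw [h2] at this
      linarith [this]
    simp only [hg]
    push_cast
    linear_combination (-2 * (2 * (j : ℚ) + 2 - 2 * s)) * h1q
  rw [Finset.sum_congr rfl key, Finset.sum_add_distrib, Finset.sum_range_sub g,
    ← Finset.mul_sum]
  have hc : ∑ s ∈ Finset.range (j + 1), ((2 * j + 3).choose s : ℚ)
      = 4 ^ (j + 1) - ((2 * j + 3).choose (j + 1) : ℚ) := by
    have h0 := Nat.sum_range_choose_halfway (j + 1)
    have h' : ∑ s ∈ Finset.range (j + 2), ((2 * j + 3).choose s : ℚ) = 4 ^ (j + 1) := by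
      exact_mod_cast congrArg (Nat.cast : ℕ → ℚ)
        (by simpa [show 2 * (j + 1) + 1 = 2 * j + 3 by ring] using h0)
    rw [Finset.sum_range_succ] at h'
    linarith
  have hsymm : (2 * j + 3).choose (j + 2) = (2 * j + 3).choose (j + 1) := by
    rw [← Nat.choose_symm (by omega : j + 2 ≤ 2 * j + 3)]
    congr 1
    omega
  rw [hc, hsymm]
  simp only [hg]
  have h23 : 2 * ((j : ℚ) + 2) - 1 ≠ 0 := by
    have : (0:ℚ) ≤ (j : ℚ) := Nat.cast_nonneg j
    intro h; linarith
  have h4 : (4 : ℚ) ^ (j + 1) = 2 ^ (2 * (j + 2)) / 4 := by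
    rw [show (4 : ℚ) = 2 ^ 2 by norm_num, ← pow_mul,
      show 2 * (j + 2) = 2 * (j + 1) + 2 by ring, pow_add]
    ring
  push_cast [h4]
  field_simp
  ring
end

section
/- For i ≥ 1, the identity ∑_{s=0}^{i-1} (2i-2s-1)(2i-2s+1)(i-s-1)·C(2i-1, s) = (i - 1/2)·2^{2i-2} + (2i² - (5/2)i)·C(2i-1, i) holds in the rationals. -/
open Finset

private noncomputable def qPoly (i : ℕ) (s : ℕ) : ℚ :=
  2 * (s:ℚ)^3 - (4 * i + 1) * (s:ℚ)^2 + (2 * (i:ℚ)^2 + 3 * i - 5/2) * s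

private noncomputable def fAux (i : ℕ) (s : ℕ) : ℚ :=
  qPoly i s * ((2 * i - 1).choose s : ℚ)

private lemma term_eq (i : ℕ) (hi : 1 ≤ i) (s : ℕ) (hs : s < i) :
    (2 * (i : ℚ) - 2 * s - 1) * (2 * (i : ℚ) - 2 * s + 1)
        * ((i : ℚ) - s - 1) * ((2 * i - 1).choose s : ℚ)
      = ((i : ℚ) - 1/2) * ((2 * i - 1).choose s : ℚ)
        + (fAux i (s+1) - fAux i s) := by
  have hkey : ((2 * i - 1).choose (s+1) : ℚ) * (s + 1)
      = ((2 * i - 1).choose s : ℚ) * (2 * (i:ℚ) - 1 - s) := by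
    have h := Nat.choose_succ_right_eq (2 * i - 1) s
    have hsub : 2 * i - 1 - s = 2 * i - 1 - s := rfl
    have hle : s ≤ 2 * i - 1 := by omega
    have hcast : ((2 * i - 1 - s : ℕ) : ℚ) = 2 * (i:ℚ) - 1 - s := by
      push_cast [Nat.cast_sub hle, Nat.cast_sub (by omega : 1 ≤ 2 * i)]
      ring
    have := congrArg (fun n : ℕ => (n : ℚ)) h
    push_cast at this
    rw [this, hcast]
  have hs1 : (s:ℚ) + 1 ≠ 0 := by positivity
  apply mul_left_cancel₀ hs1
  unfold fAux qPoly
  push_cast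
  linear_combination -(2 * ((s:ℚ)+1)^3 - (4 * i + 1) * ((s:ℚ)+1)^2
      + (2 * (i:ℚ)^2 + 3 * i - 5/2) * ((s:ℚ)+1)) * hkey

theorem caseI_identity1 (i : ℕ) (hi : 1 ≤ i) :
    ∑ s ∈ Finset.range i,
        ((2 * (i : ℚ) - 2 * s - 1) * (2 * (i : ℚ) - 2 * s + 1)
          * ((i : ℚ) - s - 1) * ((2 * i - 1).choose s : ℚ))
      = ((i : ℚ) - 1 / 2) * 2 ^ (2 * i - 2)
        + (2 * (i : ℚ) ^ 2 - (5 / 2) * i) * ((2 * i - 1).choose i : ℚ) := by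
  have hrw : ∑ s ∈ Finset.range i,
        ((2 * (i : ℚ) - 2 * s - 1) * (2 * (i : ℚ) - 2 * s + 1)
          * ((i : ℚ) - s - 1) * ((2 * i - 1).choose s : ℚ))
      = ∑ s ∈ Finset.range i,
        (((i : ℚ) - 1/2) * ((2 * i - 1).choose s : ℚ) + (fAux i (s+1) - fAux i s)) := by
    apply Finset.sum_congr rfl
    intro s hs
    exact term_eq i hi s (Finset.mem_range.mp hs)
  rw [hrw, Finset.sum_add_distrib, Finset.sum_range_sub (fAux i) i]
  have hchoose : ∑ s ∈ Finset.range i, ((2 * i - 1).choose s : ℚ) = 4 ^ (i - 1) := by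
    have h := Nat.sum_range_choose_halfway (i - 1)
    have h2 : 2 * (i - 1) + 1 = 2 * i - 1 := by omega
    have h3 : i - 1 + 1 = i := by omega
    rw [h2, h3] at h
    exact_mod_cast congrArg (fun n : ℕ => (n : ℚ)) h
  rw [← Finset.mul_sum, hchoose]
  have hpow : (4 : ℚ) ^ (i - 1) = 2 ^ (2 * i - 2) := by
    have : 2 * i - 2 = 2 * (i - 1) := by omega
    rw [this, pow_mul]
    norm_num
  have hf0 : fAux i 0 = 0 := by simp [fAux, qPoly]
  have hfi : fAux i i = (2 * (i:ℚ)^2 - (5/2) * i) * ((2 * i - 1).choose i : ℚ) := by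
    unfold fAux qPoly
    ring
  rw [hpow, hf0, hfi]
  ring
end

section
/- For i ≥ 1, the identity ∑_{s=0}^{i-1} (2i-2s-1)(2i-2s+1)(i-s+1)·C(2i-1, s-1) = (2i² - (5/2)i + 1)·C(2i-1, i) - (i - 1/2)·2^{2i-2} holds in the rationals, where C(2i-1, -1) := 0. -/
open Finset

private def Rpoly (i s : ℚ) : ℚ :=
  2 * s ^ 3 - (4 * i + 5) * s ^ 2 + (2 * i ^ 2 + 9 * i + 3 / 2) * s
    - (2 * i ^ 2 + 5 * i) + 3 / 2

private lemma choose_ratio (n t : ℕ) (ht : t ≤ n) :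
    ((n.choose (t + 1) : ℚ)) * ((t : ℚ) + 1) = (n.choose t : ℚ) * ((n : ℚ) - t) := by
  have h := Nat.choose_succ_right_eq n t
  have h2 : ((n.choose (t + 1) : ℚ)) * ((t : ℚ) + 1)
      = (n.choose t : ℚ) * (((n - t : ℕ)) : ℚ) := by exact_mod_cast h
  rw [Nat.cast_sub ht] at h2
  exact h2

theorem caseI_identity2 (i : ℕ) (hi : 1 ≤ i) :
    ∑ s ∈ Finset.range i,
        ((2 * (i : ℚ) - 2 * s - 1) * (2 * (i : ℚ) - 2 * s + 1)
          * ((i : ℚ) - s + 1)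
          * (if s = 0 then 0 else ((2 * i - 1).choose (s - 1) : ℚ)))
      = (2 * (i : ℚ) ^ 2 - (5 / 2) * i + 1) * ((2 * i - 1).choose i : ℚ)
        - ((i : ℚ) - 1 / 2) * 2 ^ (2 * i - 2) := by
  obtain ⟨j, rfl⟩ : ∃ j, i = j + 1 := ⟨i - 1, (Nat.succ_pred_eq_of_pos hi).symm⟩
  have hn : 2 * (j + 1) - 1 = 2 * j + 1 := by omega
  have hn2 : 2 * (j + 1) - 2 = 2 * j := by omega
  rw [hn, hn2, Finset.sum_range_succ']
  norm_num
  -- per-term telescoping identity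
  have key : ∀ t ∈ Finset.range j,
      (2 * ((j : ℚ) + 1) - 2 * ((t : ℚ) + 1) - 1) * (2 * ((j : ℚ) + 1) - 2 * ((t : ℚ) + 1) + 1)
          * ((j : ℚ) - (t : ℚ) + 1) * ((2 * j + 1).choose t : ℚ)
        = (-(((j : ℚ) + 1) - 1 / 2)) * ((2 * j + 1).choose t : ℚ)
          + (Rpoly ((j : ℚ) + 1) ((t : ℚ) + 2) * ((2 * j + 1).choose (t + 1) : ℚ)
            - Rpoly ((j : ℚ) + 1) ((t : ℚ) + 1) * ((2 * j + 1).choose t : ℚ)) := by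
    intro t htmem
    rw [Finset.mem_range] at htmem
    have ht : t ≤ 2 * j + 1 := by omega
    have hr := choose_ratio (2 * j + 1) t ht
    have ht1 : ((t : ℚ) + 1) ≠ 0 := by positivity
    have hc1 : ((2 * j + 1).choose (t + 1) : ℚ)
        = ((2 * j + 1).choose t : ℚ) * (((2 * j + 1 : ℕ) : ℚ) - t) / ((t : ℚ) + 1) := by
      rw [eq_div_iff ht1]; exact hr
    rw [hc1]
    unfold Rpoly
    push_cast
    field_simp
    ring
  rw [Finset.sum_congr rfl key, Finset.sum_add_distrib, Finset.sum_sub_distrib,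
    ← Finset.mul_sum]
  have tele : (∑ t ∈ Finset.range j, Rpoly ((j : ℚ) + 1) ((t : ℚ) + 2)
        * ((2 * j + 1).choose (t + 1) : ℚ))
      - (∑ t ∈ Finset.range j, Rpoly ((j : ℚ) + 1) ((t : ℚ) + 1)
        * ((2 * j + 1).choose t : ℚ))
      = Rpoly ((j : ℚ) + 1) ((j : ℚ) + 1) * ((2 * j + 1).choose j : ℚ)
        - Rpoly ((j : ℚ) + 1) 1 := by
    have h := Finset.sum_range_sub
      (fun t : ℕ => Rpoly ((j : ℚ) + 1) ((t : ℚ) + 1) * ((2 * j + 1).choose t : ℚ)) j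
    rw [Finset.sum_sub_distrib] at h
    norm_num at h
    rw [← h]
    congr 1
    refine Finset.sum_congr rfl fun t _ => ?_
    ring_nf
  rw [tele]
  -- the halfway sum
  have half : (∑ t ∈ Finset.range j, ((2 * j + 1).choose t : ℚ))
      = 4 ^ j - ((2 * j + 1).choose j : ℚ) := by
    have h := Nat.sum_range_choose_halfway j
    have h2 : ((∑ t ∈ Finset.range (j + 1), (2 * j + 1).choose t : ℕ) : ℚ)
        = ((4 ^ j : ℕ) : ℚ) := by exact_mod_cast h
    push_cast [Finset.sum_range_succ] at h2
    linarith [h2]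
  rw [half]
  -- symmetry of central binomial
  have hsymm : (2 * j + 1).choose (j + 1) = (2 * j + 1).choose j := by
    have := Nat.choose_symm (show j + 1 ≤ 2 * j + 1 by omega) (n := 2 * j + 1)
    rw [show 2 * j + 1 - (j + 1) = j by omega] at this
    exact this.symm
  rw [hsymm]
  have h4 : ((2 : ℚ)) ^ (2 * j) = 4 ^ j := by
    rw [show (4 : ℚ) = 2 ^ 2 by norm_num, ← pow_mul]
  rw [h4]
  unfold Rpoly
  ring
end

section
/- For i ≥ 1, the identity ∑_{s=0}^{i-1} (2i-2s+2)(s-1)(2i-2s-1)(2i-2s+1)·C(2i-1, s-1) = (4i³ - 5i² + 3i - 2)·C(2i-1, i) - (8i² - 12i + 4)·2^{2i-2} holds, where C(2i-1, -1) := 0 and the summand for s = 0 vanishes accordingly. -/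
open Finset

private def Rq (n t : ℚ) : ℚ :=
  4 * t ^ 4 - (4 * n + 4) * t ^ 3 + (n ^ 2 + 6 * n - 4) * t ^ 2 + (2 - n ^ 2) * t

private lemma step_lemma (n t : ℕ) (ht : t ≤ n) :
    ((n : ℚ) + 1 - 2 * t) * (t : ℚ) * ((n : ℚ) - 2 * t) * ((n : ℚ) - 2 * t - 2)
        * (n.choose t : ℚ)
      = Rq n (t + 1) * (n.choose (t + 1) : ℚ) - Rq n t * (n.choose t : ℚ)
        + (-2 * (n : ℚ) ^ 2 + 2 * n) * (n.choose t : ℚ) := by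
  have hC : (n.choose (t + 1) : ℚ) * ((t : ℚ) + 1)
      = (n.choose t : ℚ) * ((n : ℚ) - t) := by
    have h := Nat.choose_succ_right_eq n t
    have h2 := congrArg (fun x : ℕ => (x : ℚ)) h
    push_cast [Nat.cast_sub ht] at h2
    linarith
  have ht1 : ((t : ℚ) + 1) ≠ 0 := by positivity
  have h2 : (n.choose (t + 1) : ℚ) = (n.choose t : ℚ) * ((n : ℚ) - t) / ((t : ℚ) + 1) := by
    field_simp
    linarith [hC]
  rw [h2]
  simp only [Rq]
  field_simp
  ring

private def Gq (j t : ℕ) : ℚ := Rq ((2 * j + 1 : ℕ) : ℚ) t * (((2 * j + 1).choose t : ℕ) : ℚ)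

theorem caseI_identity3 (i : ℕ) (hi : 1 ≤ i) :
    ∑ s ∈ Finset.range i,
        ((2 * (i : ℚ) - 2 * s + 2) * ((s : ℚ) - 1)
          * (2 * (i : ℚ) - 2 * s - 1) * (2 * (i : ℚ) - 2 * s + 1)
          * (if s = 0 then 0 else ((2 * i - 1).choose (s - 1) : ℚ)))
      = (4 * (i : ℚ) ^ 3 - 5 * (i : ℚ) ^ 2 + 3 * i - 2) * ((2 * i - 1).choose i : ℚ)
        - (8 * (i : ℚ) ^ 2 - 12 * i + 4) * 2 ^ (2 * i - 2) := by
  obtain ⟨j, rfl⟩ : ∃ j, i = j + 1 := ⟨i - 1, (Nat.succ_pred_eq_of_pos hi).symm⟩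
  have hn1 : 2 * (j + 1) - 1 = 2 * j + 1 := by omega
  have hn2 : 2 * (j + 1) - 2 = 2 * j := by omega
  rw [hn1, hn2, Finset.sum_range_succ']
  simp only [Nat.cast_zero, if_pos rfl, if_true, mul_zero, add_zero, Nat.add_sub_cancel,
    Nat.succ_ne_zero, if_false]
  have key : ∀ x ∈ Finset.range j,
      (2 * ((j + 1 : ℕ) : ℚ) - 2 * ((x + 1 : ℕ) : ℚ) + 2) * (((x + 1 : ℕ) : ℚ) - 1)
          * (2 * ((j + 1 : ℕ) : ℚ) - 2 * ((x + 1 : ℕ) : ℚ) - 1)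
          * (2 * ((j + 1 : ℕ) : ℚ) - 2 * ((x + 1 : ℕ) : ℚ) + 1)
          * (((2 * j + 1).choose x : ℕ) : ℚ)
        = Gq j (x + 1) - Gq j x
          + (-2 * (((2 * j + 1 : ℕ)) : ℚ) ^ 2 + 2 * (((2 * j + 1 : ℕ)) : ℚ))
            * (((2 * j + 1).choose x : ℕ) : ℚ) := by
    intro x hx
    rw [Finset.mem_range] at hx
    have hle : x ≤ 2 * j + 1 := by omega
    have h := step_lemma (2 * j + 1) x hle
    simp only [Gq]
    push_cast at h ⊢
    linear_combination h
  rw [Finset.sum_congr rfl key, Finset.sum_add_distrib,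
    Finset.sum_range_sub (fun t => Gq j t), ← Finset.mul_sum]
  have hhalf : ∑ x ∈ Finset.range j, (((2 * j + 1).choose x : ℕ) : ℚ)
      = 4 ^ j - (((2 * j + 1).choose j : ℕ) : ℚ) := by
    have h := Nat.sum_range_choose_halfway j
    have h2 : ∑ x ∈ Finset.range (j + 1), (((2 * j + 1).choose x : ℕ) : ℚ) = 4 ^ j := by
      exact_mod_cast congrArg (fun x : ℕ => (x : ℚ)) h
    rw [Finset.sum_range_succ] at h2
    linarith
  have hsymm : (2 * j + 1).choose (j + 1) = (2 * j + 1).choose j := by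
    have h := Nat.choose_symm (by omega : j + 1 ≤ 2 * j + 1)
    have h2 : 2 * j + 1 - (j + 1) = j := by omega
    rw [h2] at h
    exact h.symm
  rw [hhalf, hsymm]
  have hpow : (2 : ℚ) ^ (2 * j) = 4 ^ j := by
    rw [pow_mul]; norm_num
  rw [hpow]
  simp only [Gq, Rq]
  push_cast
  ring
end

section
/- For i ≥ 1, the identity ∑_{s=0}^{i-1} s·(2i-2s)(2i-2s-1)(2i-2s+1)·C(2i-1, s) = (4i³ - 9i² + 5i)·C(2i-1, i) holds. -/
open Finset

theorem caseI_identity4 (i : ℕ) (hi : 1 ≤ i) :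
    ∑ s ∈ Finset.range i,
        ((s : ℚ) * (2 * (i : ℚ) - 2 * s) * (2 * (i : ℚ) - 2 * s - 1)
          * (2 * (i : ℚ) - 2 * s + 1) * ((2 * i - 1).choose s : ℚ))
      = (4 * (i : ℚ) ^ 3 - 9 * (i : ℚ) ^ 2 + 5 * i) * ((2 * i - 1).choose i : ℚ) := by
  set F : ℕ → ℚ := fun s =>
    (4 * (s : ℚ) ^ 4 - (8 * i + 8) * s ^ 3 + (4 * (i : ℚ) ^ 2 + 16 * i - 1) * s ^ 2
      + (-(4 * (i : ℚ) ^ 2) - 8 * i + 5) * s) * ((2 * i - 1).choose s : ℚ) with hF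
  have key : ∀ s ∈ Finset.range i,
      ((s : ℚ) * (2 * (i : ℚ) - 2 * s) * (2 * (i : ℚ) - 2 * s - 1)
          * (2 * (i : ℚ) - 2 * s + 1) * ((2 * i - 1).choose s : ℚ))
        = F (s + 1) - F s := by
    intro s hs
    rw [Finset.mem_range] at hs
    have hc := Nat.choose_succ_right_eq (2 * i - 1) s
    have hle : s ≤ 2 * i - 1 := by omega
    have hcq : ((2 * i - 1).choose (s + 1) : ℚ) * (s + 1)
        = ((2 * i - 1).choose s : ℚ) * (2 * i - 1 - s) := by
      have := congrArg (Nat.cast : ℕ → ℚ) hc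
      push_cast [Nat.cast_sub hle, Nat.cast_sub (by omega : 1 ≤ 2 * i)] at this
      exact this
    have hs1 : ((s : ℚ) + 1) ≠ 0 := by positivity
    have hcs : ((2 * i - 1).choose (s + 1) : ℚ)
        = ((2 * i - 1).choose s : ℚ) * (2 * i - 1 - s) / (s + 1) := by
      field_simp
      linarith [hcq]
    rw [hF]
    simp only [hcs]
    push_cast
    field_simp
    ring
  rw [Finset.sum_congr rfl key, Finset.sum_range_sub]
  rw [hF]
  push_cast
  ring
end

section
/- For i ≥ 1, the identity ∑_{s=0}^{i-1} (s+1)(2i-2s-2)(2i-2s-1)(2i-2s+1)·C(2i-1, s+1) = (4i³ - 5i² + i)·C(2i-1, i) + (8i² - 12i + 4)·2^{2i-2} holds. -/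
open Finset

theorem caseI_identity5 (i : ℕ) (hi : 1 ≤ i) :
    ∑ s ∈ Finset.range i,
        (((s : ℚ) + 1) * (2 * (i : ℚ) - 2 * s - 2) * (2 * (i : ℚ) - 2 * s - 1)
          * (2 * (i : ℚ) - 2 * s + 1) * ((2 * i - 1).choose (s + 1) : ℚ))
      = (4 * (i : ℚ) ^ 3 - 5 * (i : ℚ) ^ 2 + i) * ((2 * i - 1).choose i : ℚ)
        + (8 * (i : ℚ) ^ 2 - 12 * i + 4) * 2 ^ (2 * i - 2) := by
  have h2i : 1 ≤ 2 * i := by omega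
  set P : ℕ → ℚ := fun s =>
    -4 * (s : ℚ) ^ 4 + 16 * (i : ℚ) * (s : ℚ) ^ 3
      + (-20 * (i : ℚ) ^ 2 - 8 * (i : ℚ) + 9) * (s : ℚ) ^ 2
      + (8 * (i : ℚ) ^ 3 + 12 * (i : ℚ) ^ 2 - 14 * (i : ℚ) + 1) * (s : ℚ)
      + (-8 * (i : ℚ) ^ 2 + 12 * (i : ℚ) - 4) with hP
  have hhalf : ∑ s ∈ Finset.range i, ((2 * i - 1).choose s : ℚ) = 4 ^ (i - 1) := by
    have h := Nat.sum_range_choose_halfway (i - 1)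
    have e1 : i - 1 + 1 = i := by omega
    have e2 : 2 * (i - 1) + 1 = 2 * i - 1 := by omega
    rw [e1, e2] at h
    exact_mod_cast congrArg (Nat.cast (R := ℚ)) h
  have point : ∀ s ∈ Finset.range i,
      (((s : ℚ) + 1) * (2 * (i : ℚ) - 2 * s - 2) * (2 * (i : ℚ) - 2 * s - 1)
          * (2 * (i : ℚ) - 2 * s + 1) * ((2 * i - 1).choose (s + 1) : ℚ))
      = (P (s + 1) * ((2 * i - 1).choose (s + 1) : ℚ) - P s * ((2 * i - 1).choose s : ℚ))
        + (8 * (i : ℚ) ^ 2 - 12 * (i : ℚ) + 4) * ((2 * i - 1).choose (s + 1) : ℚ) := by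
    intro s hs
    rw [Finset.mem_range] at hs
    have hsn : s ≤ 2 * i - 1 := by omega
    have hrel : ((2 * i - 1).choose (s + 1) : ℚ) * ((s : ℚ) + 1)
        = ((2 * i - 1).choose s : ℚ) * ((2 * (i : ℚ) - 1) - (s : ℚ)) := by
      have h := Nat.choose_succ_right_eq (2 * i - 1) s
      have h' : (((2 * i - 1).choose (s + 1) * (s + 1) : ℕ) : ℚ)
          = (((2 * i - 1).choose s * (2 * i - 1 - s) : ℕ) : ℚ) := by exact_mod_cast h
      push_cast [Nat.cast_sub hsn, Nat.cast_sub h2i] at h'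
      linarith [h']
    have hPs : P s = -4 * (s : ℚ) ^ 4 + 16 * (i : ℚ) * (s : ℚ) ^ 3
        + (-20 * (i : ℚ) ^ 2 - 8 * (i : ℚ) + 9) * (s : ℚ) ^ 2
        + (8 * (i : ℚ) ^ 3 + 12 * (i : ℚ) ^ 2 - 14 * (i : ℚ) + 1) * (s : ℚ)
        + (-8 * (i : ℚ) ^ 2 + 12 * (i : ℚ) - 4) := rfl
    have hPs1 : P (s + 1) = -4 * ((s : ℚ) + 1) ^ 4 + 16 * (i : ℚ) * ((s : ℚ) + 1) ^ 3
        + (-20 * (i : ℚ) ^ 2 - 8 * (i : ℚ) + 9) * ((s : ℚ) + 1) ^ 2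
        + (8 * (i : ℚ) ^ 3 + 12 * (i : ℚ) ^ 2 - 14 * (i : ℚ) + 1) * ((s : ℚ) + 1)
        + (-8 * (i : ℚ) ^ 2 + 12 * (i : ℚ) - 4) := by
      rw [hP]; push_cast; ring
    rw [hPs, hPs1]
    linear_combination (-4 * (s : ℚ) ^ 3 + (8 * (i : ℚ) + 4) * (s : ℚ) ^ 2
      + (-4 * (i : ℚ) ^ 2 - 8 * (i : ℚ) + 5) * (s : ℚ) + (4 * (i : ℚ) - 4)) * hrel
  rw [Finset.sum_congr rfl point, Finset.sum_add_distrib,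
    Finset.sum_range_sub (fun s => P s * ((2 * i - 1).choose s : ℚ)) i, ← Finset.mul_sum]
  have hsum1 : ∑ s ∈ Finset.range i, ((2 * i - 1).choose (s + 1) : ℚ)
      = 4 ^ (i - 1) + ((2 * i - 1).choose i : ℚ) - 1 := by
    have h := Finset.sum_range_succ' (fun s => ((2 * i - 1).choose s : ℚ)) i
    rw [Finset.sum_range_succ, hhalf] at h
    simp only [Nat.choose_zero_right, Nat.cast_one] at h
    linarith [h]
  rw [hsum1]
  have hP0 : P 0 = -8 * (i : ℚ) ^ 2 + 12 * (i : ℚ) - 4 := by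
    rw [hP]; push_cast; ring
  have hPi : P i = -4 * (i : ℚ) ^ 4 + 16 * (i : ℚ) * (i : ℚ) ^ 3
      + (-20 * (i : ℚ) ^ 2 - 8 * (i : ℚ) + 9) * (i : ℚ) ^ 2
      + (8 * (i : ℚ) ^ 3 + 12 * (i : ℚ) ^ 2 - 14 * (i : ℚ) + 1) * (i : ℚ)
      + (-8 * (i : ℚ) ^ 2 + 12 * (i : ℚ) - 4) := rfl
  have hpow : (2 : ℚ) ^ (2 * i - 2) = 4 ^ (i - 1) := by
    have e : 2 * i - 2 = 2 * (i - 1) := by omega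
    rw [e, pow_mul]; norm_num
  rw [hP0, hPi, Nat.choose_zero_right, hpow]
  push_cast
  ring
end

section
/- For i ≥ 1, the identity 32·∑_{s=0}^{i-1} (i-s-1)(2i-2s-1)(i-s)·C(2i-1, s) = 32·i·(i-1)·C(2i-1, i) holds; equivalently ∑_{s=0}^{i-1} (i-s-1)(i-s)(2i-2s-1)·C(2i-1, s) = i(i-1)·C(2i-1, i). -/
open Finset

theorem caseII_identity (i : ℕ) (hi : 1 ≤ i) :
    32 * ∑ s ∈ Finset.range i,
        (((i : ℚ) - s - 1) * (2 * (i : ℚ) - 2 * s - 1) * ((i : ℚ) - s)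
          * ((2 * i - 1).choose s : ℚ))
      = 32 * (i : ℚ) * ((i : ℚ) - 1) * ((2 * i - 1).choose i : ℚ)
    ∧ ∑ s ∈ Finset.range i,
        (((i : ℚ) - s - 1) * ((i : ℚ) - s) * (2 * (i : ℚ) - 2 * s - 1)
          * ((2 * i - 1).choose s : ℚ))
      = (i : ℚ) * ((i : ℚ) - 1) * ((2 * i - 1).choose i : ℚ) := by
  set n := 2 * i - 1 with hn
  have hncast : ((n : ℚ)) = 2 * (i : ℚ) - 1 := by
    have : (1 : ℕ) ≤ 2 * i := by omega
    push_cast [hn, Nat.cast_sub this]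
    ring
  -- telescoping function
  set F : ℕ → ℚ := fun s =>
    ((s : ℚ) ^ 3 - 2 * i * (s : ℚ) ^ 2 + ((i : ℚ) ^ 2 + i - 1) * s) * (n.choose s : ℚ)
    with hF
  have key : ∑ s ∈ Finset.range i,
      (((i : ℚ) - s - 1) * ((i : ℚ) - s) * (2 * (i : ℚ) - 2 * s - 1)
        * (n.choose s : ℚ)) = (i : ℚ) * ((i : ℚ) - 1) * (n.choose i : ℚ) := by
    have hsum : ∑ s ∈ Finset.range i, (F (s + 1) - F s) = F i - F 0 :=
      Finset.sum_range_sub F i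
    have hcongr : ∑ s ∈ Finset.range i,
        (((i : ℚ) - s - 1) * ((i : ℚ) - s) * (2 * (i : ℚ) - 2 * s - 1)
          * (n.choose s : ℚ)) = ∑ s ∈ Finset.range i, (F (s + 1) - F s) := by
      refine Finset.sum_congr rfl fun s hs => ?_
      have hs' : s < i := Finset.mem_range.mp hs
      have hsn : s < n := by omega
      have hch : (n.choose (s + 1) : ℚ) * ((s : ℚ) + 1)
          = (n.choose s : ℚ) * ((n : ℚ) - s) := by
        have := Nat.choose_succ_right_eq n s
        have hcast : ((n - s : ℕ) : ℚ) = (n : ℚ) - s := by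
          push_cast [Nat.cast_sub hsn.le]; ring
        calc (n.choose (s + 1) : ℚ) * ((s : ℚ) + 1)
            = ((n.choose (s + 1) * (s + 1) : ℕ) : ℚ) := by push_cast; ring
          _ = ((n.choose s * (n - s) : ℕ) : ℚ) := by rw [this]
          _ = (n.choose s : ℚ) * ((n : ℚ) - s) := by push_cast [Nat.cast_sub hsn.le]; ring
      have hs1 : ((s : ℚ) + 1) ≠ 0 := by positivity
      have hch' : (n.choose (s + 1) : ℚ)
          = (n.choose s : ℚ) * ((n : ℚ) - s) / ((s : ℚ) + 1) := by
        field_simp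
        linarith [hch]
      simp only [hF]
      rw [hch', hncast]
      push_cast
      field_simp
      ring
    rw [hcongr, hsum, hF]
    simp only [Nat.cast_zero]
    ring
  constructor
  · have : ∑ s ∈ Finset.range i,
        (((i : ℚ) - s - 1) * (2 * (i : ℚ) - 2 * s - 1) * ((i : ℚ) - s)
          * (n.choose s : ℚ)) = ∑ s ∈ Finset.range i,
        (((i : ℚ) - s - 1) * ((i : ℚ) - s) * (2 * (i : ℚ) - 2 * s - 1)
          * (n.choose s : ℚ)) := by
      refine Finset.sum_congr rfl fun s _ => ?_; ring
    rw [this, key]; ring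
  · exact key
end
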